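/- Let (c_k)_{k∈ℕ} be a sequence of complex numbers such that for every complex-valued Schwartz function φ on ℝ the partial sums Σ_{k=0}^{N} c_k · φ^{(k)}(0) converge in ℂ as N → ∞. Then only finitely many of the c_k are nonzero. -/

import Mathlib

open Filter

section DiracConstruction
open Polynomial Complex
open scoped ContDiff
noncomputable section
namespace DiracAux



/-- Recursion polynomials: `B (n+1) = B n' + X * B n`. -/
def B : ℕ → Polynomial ℝ
  | 0 => 1
  | n + 1 => derivative (B n) + X * B n

lemma B_coeff_nonneg (n : ℕ) : ∀ k, 0 ≤ (B n).coeff k := by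
  induction n with
  | zero =>
    intro k
    simp only [B]
    rcases Nat.eq_zero_or_pos k with rfl | hk
    · simp
    · simp [Polynomial.coeff_one, (Nat.pos_iff_ne_zero.mp hk)]
  | succ n ih =>
    intro k
    simp only [B, coeff_add, coeff_derivative]
    rcases k with _ | k
    · have := ih 1
      simpa using by positivity
    · rw [coeff_X_mul]
      have := ih (k + 1 + 1)
      have := ih k
      positivity

lemma B_natDegree_le (n : ℕ) : (B n).natDegree ≤ n := by
  induction n with
  | zero => simp [B]
  | succ n ih =>
    simp only [B]
    refine (natDegree_add_le _ _).trans ?_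
    refine max_le ((natDegree_derivative_le _).trans ?_) ((natDegree_mul_le).trans ?_)
    · omega
    · simp [natDegree_X]; omega

lemma B_coeff_self (n : ℕ) : (B n).coeff n = 1 := by
  induction n with
  | zero => simp [B]
  | succ n ih =>
    simp only [B, coeff_add, coeff_X_mul, ih]
    rw [coeff_eq_zero_of_natDegree_lt, zero_add]
    exact lt_of_le_of_lt (natDegree_derivative_le _) (by have := B_natDegree_le n; omega)

lemma B_natDegree (n : ℕ) : (B n).natDegree = n :=
  le_antisymm (B_natDegree_le n)
    (le_natDegree_of_ne_zero (by rw [B_coeff_self]; norm_num))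



lemma eval_nonneg_of_coeff_nonneg (p : Polynomial ℝ) (hc : ∀ k, 0 ≤ p.coeff k)
    {y : ℝ} (hy : 0 ≤ y) : 0 ≤ p.eval y := by
  rw [eval_eq_sum_range]
  exact Finset.sum_nonneg fun i _ => mul_nonneg (hc i) (pow_nonneg hy i)

lemma eval_mono_of_coeff_nonneg (p : Polynomial ℝ) (hc : ∀ k, 0 ≤ p.coeff k)
    {a b : ℝ} (ha : 0 ≤ a) (hab : a ≤ b) : p.eval a ≤ p.eval b := by
  rw [eval_eq_sum_range, eval_eq_sum_range]
  exact Finset.sum_le_sum fun i _ =>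
    mul_le_mul_of_nonneg_left (pow_le_pow_left₀ ha hab i) (hc i)

lemma norm_aeval_le_of_coeff_nonneg (p : Polynomial ℝ) (hc : ∀ k, 0 ≤ p.coeff k)
    (z : ℂ) : ‖aeval z p‖ ≤ p.eval ‖z‖ := by
  rw [aeval_eq_sum_range, eval_eq_sum_range]
  refine (norm_sum_le _ _).trans (Finset.sum_le_sum fun i _ => ?_)
  rw [norm_smul, norm_pow, Real.norm_eq_abs, _root_.abs_of_nonneg (hc i)]

lemma eval_le_of_coeff_nonneg (p : Polynomial ℝ) (hc : ∀ k, 0 ≤ p.coeff k)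
    {y : ℝ} (hy : 0 ≤ y) : p.eval y ≤ p.eval 1 * (1 + y) ^ p.natDegree := by
  rw [eval_eq_sum_range, eval_eq_sum_range, Finset.sum_mul]
  refine Finset.sum_le_sum fun i hi => ?_
  rw [one_pow, mul_one]
  refine mul_le_mul_of_nonneg_left ?_ (hc i)
  calc y ^ i ≤ (1 + y) ^ i := pow_le_pow_left₀ hy (by linarith) i
    _ ≤ (1 + y) ^ p.natDegree :=
        pow_le_pow_right₀ (by linarith) (Nat.lt_succ_iff.mp (Finset.mem_range.mp hi))





lemma pow_le_eval_B (n : ℕ) {m : ℝ} (hm : 0 ≤ m) : m ^ n ≤ (B n).eval m := by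
  rw [eval_eq_sum_range, B_natDegree]
  have h := Finset.single_le_sum (f := fun i => (B n).coeff i * m ^ i)
    (fun i _ => mul_nonneg (B_coeff_nonneg n i) (pow_nonneg hm i))
    (Finset.self_mem_range_succ n)
  simpa [B_coeff_self] using h

/-- Uniform bound for `(1+|x|)^d * exp(-(x^2/2))`. -/
lemma exists_bound_pow_mul_exp (d : ℕ) :
    ∃ K : ℝ, 0 ≤ K ∧ ∀ x : ℝ, (1 + |x|) ^ d * Real.exp (-(x ^ 2 / 2)) ≤ K := by
  refine ⟨2 ^ d * (2 ^ d * d.factorial * Real.exp ((1 : ℝ) / 2)), by positivity, fun x => ?_⟩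
  have h1 : (1 + |x|) ^ d ≤ (2 * (1 + x ^ 2)) ^ d := by
    refine pow_le_pow_left₀ (by positivity) ?_ d
    have := abs_nonneg x
    nlinarith [_root_.sq_abs x, sq_nonneg (1 - |x|)]
  have h2 : (1 + x ^ 2) ^ d ≤ 2 ^ d * d.factorial * Real.exp ((1 + x ^ 2) / 2) := by
    have h := Real.pow_div_factorial_le_exp (x := (1 + x ^ 2) / 2) (by positivity) d
    rw [show ((1 + x ^ 2) / 2) ^ d = (1 + x ^ 2) ^ d / 2 ^ d from div_pow _ _ _, div_div] at h
    have hd : (0:ℝ) < 2 ^ d * d.factorial := by positivity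
    calc (1 + x ^ 2) ^ d
        = (1 + x ^ 2) ^ d / (2 ^ d * d.factorial) * (2 ^ d * d.factorial) := by field_simp
      _ ≤ Real.exp ((1 + x ^ 2) / 2) * (2 ^ d * d.factorial) :=
          mul_le_mul_of_nonneg_right h hd.le
      _ = 2 ^ d * d.factorial * Real.exp ((1 + x ^ 2) / 2) := by ring
  calc (1 + |x|) ^ d * Real.exp (-(x ^ 2 / 2))
      ≤ (2 * (1 + x ^ 2)) ^ d * Real.exp (-(x ^ 2 / 2)) := by
        exact mul_le_mul_of_nonneg_right h1 (Real.exp_nonneg _)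
    _ = 2 ^ d * ((1 + x ^ 2) ^ d * Real.exp (-(x ^ 2 / 2))) := by rw [mul_pow]; ring
    _ ≤ 2 ^ d * (2 ^ d * d.factorial * Real.exp ((1 + x ^ 2) / 2) * Real.exp (-(x ^ 2 / 2))) := by
        refine mul_le_mul_of_nonneg_left (mul_le_mul_of_nonneg_right h2 (Real.exp_nonneg _))
          (by positivity)
    _ = 2 ^ d * (2 ^ d * d.factorial * Real.exp ((1 : ℝ) / 2)) := by
        rw [mul_assoc _ _ (Real.exp _), ← Real.exp_add]; ring_nf



/-- The modulated Gaussian. -/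
def ψ (m : ℝ) : ℝ → ℂ := fun x => Complex.exp (I * m * x - x ^ 2 / 2)

lemma hasDerivAt_ofReal' (x : ℝ) : HasDerivAt (fun y : ℝ => (y : ℂ)) 1 x := by
  simpa using (hasDerivAt_id x).ofReal_comp

lemma ψ_hasDerivAt (m : ℝ) (x : ℝ) :
    HasDerivAt (ψ m) (ψ m x * (I * m - x)) x := by
  have hu : HasDerivAt (fun y : ℝ => I * m * y - (y : ℂ) ^ 2 / 2) (I * m - x) x := by
    have h1 : HasDerivAt (fun y : ℝ => I * (m : ℂ) * y) (I * m) x := by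
      simpa only [mul_one] using (hasDerivAt_ofReal' x).const_mul (I * (m : ℂ))
    have h2 : HasDerivAt (fun y : ℝ => (y : ℂ) ^ 2 / 2) (x : ℂ) x := by
      have h3 := ((hasDerivAt_ofReal' x).mul (hasDerivAt_ofReal' x)).div_const 2
      simp only [← pow_two] at h3
      refine h3.congr_deriv ?_
      push_cast
      ring
    exact h1.sub h2
  exact hu.cexp

lemma ψ_norm (m : ℝ) (x : ℝ) : ‖ψ m x‖ = Real.exp (-(x ^ 2 / 2)) := by
  rw [ψ, Complex.norm_exp]
  congr 1
  simp [Complex.sub_re, Complex.mul_re, Complex.div_re, ← Complex.ofReal_pow]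

lemma ψ_contDiff (m : ℝ) : ContDiff ℝ ∞ (ψ m) := by
  refine Complex.contDiff_exp.comp ?_
  refine ContDiff.sub ?_ ?_
  · exact contDiff_const.mul Complex.ofRealCLM.contDiff
  · exact (Complex.ofRealCLM.contDiff.pow 2).div_const 2

lemma aeval_hasDerivAt (p : Polynomial ℝ) (m x : ℝ) :
    HasDerivAt (fun y : ℝ => aeval ((m : ℂ) + I * y) p)
      (I * aeval ((m : ℂ) + I * x) (derivative p)) x := by
  have hg : HasDerivAt (fun y : ℝ => (m : ℂ) + I * y) I x := by
    simpa using ((hasDerivAt_ofReal' x).const_mul I).const_add (m : ℂ)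
  have hp := Polynomial.hasDerivAt (p.map (algebraMap ℝ ℂ)) ((m : ℂ) + I * x)
  have := HasDerivAt.comp (h := fun y : ℝ => (m : ℂ) + I * y)
    (h₂ := fun z : ℂ => (p.map (algebraMap ℝ ℂ)).eval z) (x := x) hp hg
  simp only [Function.comp_def] at this
  simp only [aeval_def, ← eval_map, derivative_map]
  refine this.congr_deriv ?_
  rw [derivative_map]
  ring

lemma ψ_iteratedDeriv (m : ℝ) (n : ℕ) (x : ℝ) :
    iteratedDeriv n (ψ m) x = I ^ n * aeval ((m : ℂ) + I * x) (B n) * ψ m x := by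
  induction n generalizing x with
  | zero => simp [B]
  | succ n ih =>
    rw [iteratedDeriv_succ]
    have hfun : iteratedDeriv n (ψ m) =
        fun (y : ℝ) => I ^ n * aeval ((m : ℂ) + I * y) (B n) * ψ m y := funext fun y => ih y
    rw [hfun]
    have hd : HasDerivAt (fun y : ℝ => I ^ n * aeval ((m : ℂ) + I * y) (B n) * ψ m y)
        (I ^ n * (I * aeval ((m : ℂ) + I * x) (derivative (B n))) * ψ m x
          + I ^ n * aeval ((m : ℂ) + I * x) (B n) * (ψ m x * (I * m - x))) x := by
      exact (((aeval_hasDerivAt (B n) m x).const_mul (I ^ n)).mul (ψ_hasDerivAt m x))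
    rw [hd.deriv]
    have hB : (aeval ((m : ℂ) + I * x)) (B (n + 1)) =
        aeval ((m : ℂ) + I * x) (derivative (B n))
          + ((m : ℂ) + I * x) * aeval ((m : ℂ) + I * x) (B n) := by
      simp [B, map_add, map_mul]
    rw [hB]
    have hI : (I : ℂ) * I = -1 := Complex.I_mul_I
    ring_nf
    linear_combination (-(I ^ n * (x : ℂ) * ψ m x *
      (Polynomial.aeval (I * (x : ℂ) + (m : ℂ)) (B n)))) * Complex.I_sq














lemma E_nonneg (n : ℕ) : 0 ≤ (B n).eval 1 :=
  eval_nonneg_of_coeff_nonneg _ (B_coeff_nonneg n) zero_le_one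

lemma norm_iteratedDeriv_ψ_le {m : ℝ} (hm : 0 ≤ m) (n : ℕ) (x : ℝ) :
    ‖iteratedDeriv n (ψ m) x‖ ≤
      (B n).eval 1 * (1 + m) ^ n * ((1 + |x|) ^ n * Real.exp (-(x ^ 2 / 2))) := by
  rw [ψ_iteratedDeriv, norm_mul, norm_mul, norm_pow, Complex.norm_I, one_pow, one_mul, ψ_norm]
  have h1 : ‖(m : ℂ) + I * x‖ ≤ m + |x| := by
    refine (norm_add_le _ _).trans ?_
    rw [Complex.norm_real, Real.norm_eq_abs, _root_.abs_of_nonneg hm, norm_mul, Complex.norm_I,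
      one_mul, Complex.norm_real, Real.norm_eq_abs]
  have h2 : ‖aeval ((m : ℂ) + I * x) (B n)‖ ≤ (B n).eval (m + |x|) :=
    (norm_aeval_le_of_coeff_nonneg _ (B_coeff_nonneg n) _).trans
      (eval_mono_of_coeff_nonneg _ (B_coeff_nonneg n) (norm_nonneg _) h1)
  have h3 : (B n).eval (m + |x|) ≤ (B n).eval 1 * ((1 + m) * (1 + |x|)) ^ n := by
    refine ((eval_le_of_coeff_nonneg _ (B_coeff_nonneg n)
      (by positivity)).trans ?_)
    rw [B_natDegree]
    refine mul_le_mul_of_nonneg_left (pow_le_pow_left₀ (by positivity) ?_ n) (E_nonneg n)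
    have : 0 ≤ m * |x| := by positivity
    nlinarith [abs_nonneg x]
  calc ‖aeval ((m : ℂ) + I * x) (B n)‖ * Real.exp (-(x ^ 2 / 2))
      ≤ (B n).eval 1 * ((1 + m) * (1 + |x|)) ^ n * Real.exp (-(x ^ 2 / 2)) :=
        mul_le_mul_of_nonneg_right (h2.trans h3) (Real.exp_nonneg _)
    _ = (B n).eval 1 * (1 + m) ^ n * ((1 + |x|) ^ n * Real.exp (-(x ^ 2 / 2))) := by
        rw [mul_pow]; ring

lemma exists_schwartz (m t : ℕ → ℝ) (hm : ∀ j, 1 ≤ m j) (ht : ∀ j, 0 < t j)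
    (hsum : ∀ n : ℕ, Summable fun j => t j * (1 + m j) ^ n) :
    ∃ Φ : SchwartzMap ℝ ℂ, ∀ n j0 : ℕ, t j0 * m j0 ^ n ≤ ‖iteratedDeriv n (⇑Φ) 0‖ := by
  classical
  set F : ℕ → ℝ → ℂ := fun j x => t j • ψ (m j) x with hF
  have hm0 : ∀ j, (0:ℝ) ≤ m j := fun j => zero_le_one.trans (hm j)
  have hFc : ∀ j, ContDiff ℝ ∞ (F j) := fun j => (ψ_contDiff (m j)).const_smul (t j)
  obtain ⟨K, hK0, hK⟩ : ∃ K : ℕ → ℝ, (∀ d, 0 ≤ K d) ∧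
      ∀ d (x : ℝ), (1 + |x|) ^ d * Real.exp (-(x ^ 2 / 2)) ≤ K d := by
    choose K h1 h2 using exists_bound_pow_mul_exp
    exact ⟨K, h1, h2⟩
  -- pointwise bound on iterated derivatives of `F j`, with an extra weight `(1+|x|)^a`
  have key : ∀ (n j : ℕ) (x : ℝ), ‖iteratedFDeriv ℝ n (F j) x‖ ≤
      t j * ((B n).eval 1 * (1 + m j) ^ n) * ((1 + |x|) ^ n * Real.exp (-(x ^ 2 / 2))) := by
    intro n j x
    have hsm : iteratedFDeriv ℝ n (F j) x = t j • iteratedFDeriv ℝ n (ψ (m j)) x := by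
      have : F j = t j • (ψ (m j)) := rfl
      rw [this, iteratedFDeriv_const_smul_apply ((ψ_contDiff (m j)).of_le (m := n) (by exact_mod_cast le_top)).contDiffAt]
    rw [hsm]
    rw [norm_smul (t j) (iteratedFDeriv ℝ n (ψ (m j)) x), norm_iteratedFDeriv_eq_norm_iteratedDeriv]
    have := norm_iteratedDeriv_ψ_le (hm0 j) n x
    calc ‖t j‖ * ‖iteratedDeriv n (ψ (m j)) x‖
        = t j * ‖iteratedDeriv n (ψ (m j)) x‖ := by
          rw [Real.norm_eq_abs, abs_of_pos (ht j)]
      _ ≤ t j * ((B n).eval 1 * (1 + m j) ^ n * ((1 + |x|) ^ n * Real.exp (-(x ^ 2 / 2)))) :=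
          mul_le_mul_of_nonneg_left this (ht j).le
      _ = _ := by ring
  set v : ℕ → ℕ → ℝ := fun n j => t j * ((B n).eval 1 * (1 + m j) ^ n) * K n with hv
  have hvs : ∀ n, Summable (v n) := by
    intro n
    have := (hsum n).mul_left ((B n).eval 1 * K n)
    refine this.congr fun j => ?_
    simp only [hv]; ring
  have hFb : ∀ (k : ℕ) (j : ℕ) (x : ℝ), ‖iteratedFDeriv ℝ k (F j) x‖ ≤ v k j := by
    intro k j x
    refine (key k j x).trans ?_
    refine mul_le_mul_of_nonneg_left (hK k x) ?_
    have h1 := E_nonneg k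
    have h2 := (ht j).le
    have h3 := hm0 j
    positivity
  have hsmooth : ContDiff ℝ ∞ (fun x => ∑' j, F j x) :=
    contDiff_tsum hFc (fun k _ => hvs k) (fun k j x _ => hFb k j x)
  have hiterf : ∀ (n : ℕ) (x : ℝ), iteratedFDeriv ℝ n (fun y => ∑' j, F j y) x
      = ∑' j, iteratedFDeriv ℝ n (F j) x :=
    fun n x => iteratedFDeriv_tsum_apply hFc (fun k _ => hvs k) (fun k j x _ => hFb k j x)
      le_top x
  have hdecay : ∀ (a n : ℕ), ∃ C : ℝ, ∀ x : ℝ,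
      ‖x‖ ^ a * ‖iteratedFDeriv ℝ n (fun y => ∑' j, F j y) x‖ ≤ C := by
    intro a n
    refine ⟨(∑' j, t j * ((B n).eval 1 * (1 + m j) ^ n)) * K (a + n), fun x => ?_⟩
    rw [hiterf n x]
    have hsum1 : Summable fun j => ‖iteratedFDeriv ℝ n (F j) x‖ :=
      Summable.of_nonneg_of_le (fun j => norm_nonneg _) (fun j => hFb n j x) (hvs n)
    have h1 : ‖∑' j, iteratedFDeriv ℝ n (F j) x‖ ≤ ∑' j, ‖iteratedFDeriv ℝ n (F j) x‖ :=
      norm_tsum_le_tsum_norm hsum1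
    have hsum2 : Summable fun j => t j * ((B n).eval 1 * (1 + m j) ^ n) := by
      have := (hsum n).mul_left ((B n).eval 1)
      refine this.congr fun j => ?_; ring
    have h2 : ∑' j, ‖iteratedFDeriv ℝ n (F j) x‖ ≤
        (∑' j, t j * ((B n).eval 1 * (1 + m j) ^ n)) * ((1 + |x|) ^ n * Real.exp (-(x ^ 2 / 2))) := by
      rw [← tsum_mul_right]
      refine Summable.tsum_le_tsum (fun j => key n j x) hsum1 ?_
      exact hsum2.mul_right _
    have hx : ‖x‖ ^ a ≤ (1 + |x|) ^ a := by
      rw [Real.norm_eq_abs]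
      exact pow_le_pow_left₀ (abs_nonneg x) (by linarith [abs_nonneg x]) a
    have hTnonneg : 0 ≤ ∑' j, t j * ((B n).eval 1 * (1 + m j) ^ n) := by
      refine tsum_nonneg fun j => ?_
      have := E_nonneg n; have := (ht j).le; have := hm0 j; positivity
    calc ‖x‖ ^ a * ‖∑' j, iteratedFDeriv ℝ n (F j) x‖
        ≤ (1 + |x|) ^ a * ((∑' j, t j * ((B n).eval 1 * (1 + m j) ^ n)) *
            ((1 + |x|) ^ n * Real.exp (-(x ^ 2 / 2)))) := by
          refine mul_le_mul hx (h1.trans h2) (norm_nonneg _) (by positivity)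
      _ = (∑' j, t j * ((B n).eval 1 * (1 + m j) ^ n)) *
            ((1 + |x|) ^ (a + n) * Real.exp (-(x ^ 2 / 2))) := by
          rw [pow_add]; ring
      _ ≤ (∑' j, t j * ((B n).eval 1 * (1 + m j) ^ n)) * K (a + n) :=
          mul_le_mul_of_nonneg_left (hK (a + n) x) hTnonneg
  refine ⟨⟨fun x => ∑' j, F j x, hsmooth, hdecay⟩, ?_⟩
  intro n j0
  -- value of the iterated derivative at 0
  have hsummand : ∀ j, iteratedDeriv n (F j) 0 = I ^ n * ((t j * (B n).eval (m j) : ℝ) : ℂ) := by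
    intro j
    have hsm : iteratedDeriv n (F j) 0 = t j • iteratedDeriv n (ψ (m j)) 0 := by
      rw [iteratedDeriv_eq_iteratedFDeriv, iteratedDeriv_eq_iteratedFDeriv]
      have : F j = t j • (ψ (m j)) := rfl
      rw [this, iteratedFDeriv_const_smul_apply ((ψ_contDiff (m j)).of_le (m := n) (by exact_mod_cast le_top)).contDiffAt]
      rfl
    rw [hsm, ψ_iteratedDeriv]
    have hψ0 : ψ (m j) 0 = 1 := by simp [ψ]
    have haev : aeval ((m j : ℂ) + I * (0:ℝ)) (B n) = (((B n).eval (m j) : ℝ) : ℂ) := by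
      push_cast
      rw [mul_zero, add_zero]
      rw [show ((m j : ℂ)) = algebraMap ℝ ℂ (m j) from rfl,
        aeval_algebraMap_apply_eq_algebraMap_eval]
      rfl
    rw [hψ0, haev, Complex.real_smul]
    push_cast
    ring
  have hrs : Summable fun j => t j * (B n).eval (m j) := by
    have hsum2 : Summable fun j => t j * ((B n).eval 1 * (1 + m j) ^ n) := by
      have := (hsum n).mul_left ((B n).eval 1)
      refine this.congr fun j => ?_; ring
    refine Summable.of_nonneg_of_le (fun j => ?_) (fun j => ?_) hsum2
    · exact mul_nonneg (ht j).le (eval_nonneg_of_coeff_nonneg _ (B_coeff_nonneg n) (hm0 j))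
    · refine mul_le_mul_of_nonneg_left ?_ (ht j).le
      refine (eval_le_of_coeff_nonneg _ (B_coeff_nonneg n) (hm0 j)).trans ?_
      rw [B_natDegree]
  have hFsummable : Summable fun j => iteratedFDeriv ℝ n (F j) 0 :=
    Summable.of_norm_bounded (hvs n) (fun j => hFb n j 0)
  have hiter0 : iteratedDeriv n (fun y => ∑' j, F j y) 0 = ∑' j, iteratedDeriv n (F j) 0 := by
    rw [iteratedDeriv_eq_iteratedFDeriv, hiterf n 0]
    exact (ContinuousMultilinearMap.apply ℝ (fun _ : Fin n => ℝ) ℂ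
      (fun _ => 1)).map_tsum hFsummable
  have hval : iteratedDeriv n (fun y => ∑' j, F j y) 0
      = I ^ n * ((∑' j, t j * (B n).eval (m j) : ℝ) : ℂ) := by
    rw [hiter0]
    have : (fun j => iteratedDeriv n (F j) 0)
        = fun j => I ^ n * ((t j * (B n).eval (m j) : ℝ) : ℂ) := funext hsummand
    rw [this, tsum_mul_left, Complex.ofReal_tsum]
  have hcoe : iteratedDeriv n (⇑(⟨fun x => ∑' j, F j x, hsmooth, hdecay⟩ : SchwartzMap ℝ ℂ)) 0
      = iteratedDeriv n (fun y => ∑' j, F j y) 0 := rfl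
  rw [hcoe, hval, norm_mul, norm_pow, Complex.norm_I, one_pow, one_mul, Complex.norm_real,
    Real.norm_eq_abs, _root_.abs_of_nonneg (tsum_nonneg fun j =>
      mul_nonneg (ht j).le (eval_nonneg_of_coeff_nonneg _ (B_coeff_nonneg n) (hm0 j)))]
  calc t j0 * m j0 ^ n ≤ t j0 * (B n).eval (m j0) :=
        mul_le_mul_of_nonneg_left (pow_le_eval_B n (hm0 j0)) (ht j0).le
    _ ≤ ∑' j, t j * (B n).eval (m j) :=
        Summable.le_tsum hrs j0 fun i _ =>
          mul_nonneg (ht i).le (eval_nonneg_of_coeff_nonneg _ (B_coeff_nonneg n) (hm0 i))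


end DiracAux
end
end DiracConstruction





lemma DiracAux.ratio_le {a : ℝ} (ha : 2 ≤ a) (n d : ℕ) :
    a ^ n * (a⁻¹) ^ (n + d) ≤ (2:ℝ) ^ n * ((2:ℝ)⁻¹) ^ (n + d) := by
  have ha0 : (0:ℝ) < a := by linarith
  have e1 : ∀ b : ℝ, b ≠ 0 → b ^ n * (b⁻¹) ^ (n + d) = (b⁻¹) ^ d := by
    intro b hb
    rw [pow_add, inv_pow, inv_pow]
    field_simp
  rw [e1 a (ne_of_gt ha0), e1 2 (by norm_num)]
  refine pow_le_pow_left₀ (by positivity) ?_ d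
  exact inv_anti₀ (by norm_num) ha

lemma DiracAux.ratio_eq {a : ℝ} (ha : a ≠ 0) (jj d : ℕ) :
    (a⁻¹) ^ jj * a ^ (jj + d) = a ^ d := by
  rw [pow_add, inv_pow]
  field_simp

open DiracAux in
theorem convergent_dirac_series_implies_finitely_many_coeffs (c : ℕ → ℂ)
    (h : ∀ φ : SchwartzMap ℝ ℂ, ∃ L : ℂ,
      Tendsto (fun N : ℕ => ∑ k ∈ Finset.range (N + 1), c k * iteratedDeriv k (⇑φ) 0)
        atTop (nhds L)) :
    {k : ℕ | c k ≠ 0}.Finite := by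
  by_contra hinf
  replace hinf : {k : ℕ | c k ≠ 0}.Infinite := hinf
  -- choose a strictly large index with nonzero coefficient above each `j`
  have hex : ∀ j : ℕ, ∃ b, b ∈ {k : ℕ | c k ≠ 0} ∧ j < b := by
    intro j
    obtain ⟨b, hb, hjb⟩ := hinf.exists_gt j
    exact ⟨b, hb, hjb⟩
  choose k hk hjk using hex
  have hkne : ∀ j, c (k j) ≠ 0 := fun j => hk j
  have hknorm : ∀ j, (0:ℝ) < ‖c (k j)‖ := fun j => norm_pos_iff.mpr (hkne j)
  -- frequencies and weights
  set m : ℕ → ℝ := fun j => 2 + (j + 1) / ‖c (k j)‖ with hmdef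
  set t : ℕ → ℝ := fun j => ((m j)⁻¹) ^ j with htdef
  have hm2 : ∀ j, 2 ≤ m j := fun j => by
    have : 0 ≤ (j + 1 : ℝ) / ‖c (k j)‖ := by positivity
    simp only [hmdef]; linarith
  have hm1 : ∀ j, 1 ≤ m j := fun j => by linarith [hm2 j]
  have hm0 : ∀ j, 0 < m j := fun j => by linarith [hm2 j]
  have ht0 : ∀ j, 0 < t j := fun j => by
    simp only [htdef]; positivity
  -- summability
  have hsum : ∀ n : ℕ, Summable fun j => t j * (1 + m j) ^ n := by
    intro n
    have hgeom : Summable fun j : ℕ => (4:ℝ) ^ n * (2:ℝ)⁻¹ ^ j :=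
      (summable_geometric_of_lt_one (by norm_num) (by norm_num)).mul_left _
    refine hgeom.of_norm_bounded_eventually_nat ?_
    filter_upwards [eventually_ge_atTop n] with j hj
    obtain ⟨d, hd⟩ := Nat.exists_eq_add_of_le hj
    have hmj := hm2 j
    have htj := ht0 j
    have h1m : (1 + m j) ≤ 2 * m j := by linarith
    have hb : t j * (1 + m j) ^ n ≤ 2 ^ n * (m j ^ n * (m j)⁻¹ ^ j) := by
      calc t j * (1 + m j) ^ n ≤ t j * (2 * m j) ^ n := by
            refine mul_le_mul_of_nonneg_left (pow_le_pow_left₀ (by linarith) h1m n) htj.le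
        _ = 2 ^ n * (m j ^ n * (m j)⁻¹ ^ j) := by
            simp only [htdef]; rw [mul_pow]; ring
    have hsmall : m j ^ n * (m j)⁻¹ ^ j ≤ (2:ℝ) ^ n * (2:ℝ)⁻¹ ^ j := by
      have h := DiracAux.ratio_le hmj n d
      rw [← hd] at h
      exact h
    rw [Real.norm_eq_abs, _root_.abs_of_nonneg (by positivity)]
    calc t j * (1 + m j) ^ n ≤ 2 ^ n * ((2:ℝ) ^ n * (2:ℝ)⁻¹ ^ j) :=
          hb.trans (mul_le_mul_of_nonneg_left hsmall (by positivity))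
      _ = (4:ℝ) ^ n * (2:ℝ)⁻¹ ^ j := by
          rw [show (4:ℝ) = 2 * 2 by norm_num, mul_pow]; ring
  obtain ⟨Φ, hΦ⟩ := exists_schwartz m t hm1 ht0 hsum
  obtain ⟨L, hL⟩ := h Φ
  -- terms of a convergent series tend to zero
  have hterm : Tendsto (fun N : ℕ => c (N + 1) * iteratedDeriv (N + 1) (⇑Φ) 0) atTop (nhds 0) := by
    have h1 : Tendsto (fun N : ℕ => ∑ k ∈ Finset.range (N + 1 + 1), c k * iteratedDeriv k (⇑Φ) 0)
        atTop (nhds L) := hL.comp (tendsto_add_atTop_nat 1)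
    have h2 := h1.sub hL
    rw [sub_self] at h2
    refine h2.congr fun N => ?_
    rw [Finset.sum_range_succ]
    ring
  -- lower bound for the chosen subsequence
  have hlow : ∀ j : ℕ, (j + 1 : ℝ) ≤ ‖c (k j) * iteratedDeriv (k j) (⇑Φ) 0‖ := by
    intro j
    rw [norm_mul]
    have h1 : t j * m j ^ (k j) ≤ ‖iteratedDeriv (k j) (⇑Φ) 0‖ := hΦ (k j) j
    have h2 : m j ≤ t j * m j ^ (k j) := by
      obtain ⟨d, hd⟩ := Nat.exists_eq_add_of_le (le_of_lt (hjk j))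
      have hjj := hjk j
      have hd1 : d ≠ 0 := by omega
      have : t j * m j ^ (k j) = m j ^ d := by
        simp only [htdef]
        rw [hd]
        exact DiracAux.ratio_eq (ne_of_gt (hm0 j)) j d
      rw [this]
      exact le_self_pow₀ (hm1 j) hd1
    have h3 : (j + 1 : ℝ) / ‖c (k j)‖ ≤ m j := by
      simp only [hmdef]; linarith
    have h4 : (j + 1 : ℝ) ≤ ‖c (k j)‖ * m j := by
      rw [div_le_iff₀ (hknorm j)] at h3
      linarith [h3]
    calc (j + 1 : ℝ) ≤ ‖c (k j)‖ * m j := h4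
      _ ≤ ‖c (k j)‖ * ‖iteratedDeriv (k j) (⇑Φ) 0‖ :=
          mul_le_mul_of_nonneg_left (h2.trans h1) (norm_nonneg _)
  -- contradiction
  have hksub : Tendsto (fun j : ℕ => k j - 1) atTop atTop := by
    refine tendsto_atTop_mono (fun j => ?_) tendsto_id
    simp only [id]
    have := hjk j; omega
  have htendsub : Tendsto (fun j : ℕ => c (k j) * iteratedDeriv (k j) (⇑Φ) 0) atTop (nhds 0) := by
    have := hterm.comp hksub
    refine this.congr fun j => ?_
    have hj1 : k j - 1 + 1 = k j := by have := hjk j; omega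
    simp only [Function.comp]
    rw [hj1]
  have hn0 : Tendsto (fun j : ℕ => ‖c (k j) * iteratedDeriv (k j) (⇑Φ) 0‖) atTop (nhds 0) := by
    simpa using htendsub.norm
  obtain ⟨N, hN⟩ := Metric.tendsto_atTop.mp hn0 1 one_pos
  have h5 := hN N le_rfl
  rw [Real.dist_eq, sub_zero, _root_.abs_of_nonneg (norm_nonneg _)] at h5
  have hcontr := hlow N
  have hN0 : (0:ℝ) ≤ N := Nat.cast_nonneg N
  linarith
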